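/- Let $k \geq 1$, $M_1, \dots, M_k$ positive integers, $\mathcal{P} = [1,M_1] \times \cdots \times [1,M_k]$, $I$ a finite set, and for each $i \in I$ a function $\varphi_i : \mathcal{P} \to \mathbb{C}$ such that all mixed partial derivatives of order $r \leq k$ (one derivative in each of $r$ distinct coordinate directions) exist, are continuous, and satisfy $|\partial^r \varphi_i / \partial x_{j_1} \cdots \partial x_{j_r}| \leq D / (M_{j_1} \cdots M_{j_r})$ on $\mathcal{P}$. Then for any complex numbers $a_i(\mathbf{m})$, $\sum_{i \in I} \left| \sum_{\mathbf{m} \in \mathcal{P} \cap \mathbb{N}^k} a_i(\mathbf{m}) \varphi_i(\mathbf{m}) \right| \leq 2^k D \max_{\mathcal{P}'} \sum_{i \in I} \left| \sum_{\mathbf{m} \in \mathcal{P}' \cap \mathbb{N}^k} a_i(\mathbf{m}) \right|$, the maximum over boxes $\mathcal{P}' = [1,M_1'] \times \cdots \times [1,M_k'] \subseteq \mathcal{P}$. -/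

import Mathlib

open Finset

noncomputable section MPShelp



variable {k : ℕ}

def MPScnt' {n : ℕ} (δ : Fin n → Bool) : ℕ := ∑ l, if δ l then 1 else 0

def MPSbox (M : Fin k → ℕ) : Finset (Fin k → ℕ) :=
  Fintype.piFinset (fun j => Finset.Icc 1 (M j))

def MPSsub (n : Fin k → ℕ) (ε : Fin k → Bool) : Fin k → ℕ :=
  fun j => n j - (if ε j then 1 else 0)

def MPSA (a : (Fin k → ℕ) → ℂ) (m : Fin k → ℕ) : ℂ := ∑ n ∈ MPSbox m, a n

lemma MPSA_zero (a : (Fin k → ℕ) → ℂ) (m : Fin k → ℕ) (j : Fin k) (hj : m j = 0) :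
    MPSA a m = 0 := by
  have : MPSbox m = ∅ := by
    refine Finset.eq_empty_of_forall_notMem fun x hx => ?_
    have := (Fintype.mem_piFinset.1 hx) j
    rw [hj] at this
    simp at this
  rw [MPSA, this, Finset.sum_empty]

lemma MPS_diff (a : (Fin k → ℕ) → ℂ) (n : Fin k → ℕ) (hn : ∀ j, 1 ≤ n j) :
    ∑ ε : Fin k → Bool, (-1:ℂ)^(MPScnt' ε) * MPSA a (MPSsub n ε) = a n := by
  classical
  have hA : ∀ ε : Fin k → Bool, MPSA a (MPSsub n ε)
      = ∑ m ∈ MPSbox n, if m ∈ MPSbox (MPSsub n ε) then a m else 0 := by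
    intro ε
    rw [Finset.sum_ite_mem, Finset.inter_eq_right.2, MPSA]
    exact Fintype.piFinset_subset _ _ fun j => Finset.Icc_subset_Icc_right (Nat.sub_le _ _)
  have he : ∀ (ε : Fin k → Bool) (j : Fin k), (if ε j then 1 else 0) ≤ n j :=
    fun ε j => le_trans (by split <;> omega) (hn j)
  have hterm : ∀ (ε : Fin k → Bool) (m : Fin k → ℕ), m ∈ MPSbox n →
      (-1:ℂ)^(MPScnt' ε) * (if m ∈ MPSbox (MPSsub n ε) then a m else 0)
      = a m * ∏ j, (if m j + (if ε j then 1 else 0) ≤ n j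
          then (-1:ℂ)^(if ε j then 1 else 0) else 0) := by
    intro ε m hm
    have hm' : ∀ j, 1 ≤ m j ∧ m j ≤ n j := by
      simpa [MPSbox, Fintype.mem_piFinset, Finset.mem_Icc] using hm
    have hmem : (m ∈ MPSbox (MPSsub n ε)) ↔ ∀ j, m j + (if ε j then 1 else 0) ≤ n j := by
      simp only [MPSbox, MPSsub, Fintype.mem_piFinset, Finset.mem_Icc]
      constructor
      · intro h j
        exact (Nat.le_sub_iff_add_le (he ε j)).1 (h j).2
      · intro h j
        exact ⟨(hm' j).1, (Nat.le_sub_iff_add_le (he ε j)).2 (h j)⟩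
    rw [if_congr hmem rfl rfl]
    have h1 : (∏ j, (if m j + (if ε j then 1 else 0) ≤ n j
          then (-1:ℂ)^(if ε j then 1 else 0) else 0))
        = (-1:ℂ)^(MPScnt' ε) *
          (if (∀ j, m j + (if ε j then 1 else 0) ≤ n j) then (1:ℂ) else 0) := by
      by_cases hall : ∀ j, m j + (if ε j then 1 else 0) ≤ n j
      · rw [if_pos hall, mul_one]
        calc (∏ j, (if m j + (if ε j then 1 else 0) ≤ n j
                then (-1:ℂ)^(if ε j then 1 else 0) else 0))
            = ∏ j, (-1:ℂ)^(if ε j then 1 else 0) :=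
              Finset.prod_congr rfl fun j _ => if_pos (hall j)
          _ = (-1:ℂ)^(MPScnt' ε) := by
              rw [Finset.prod_pow_eq_pow_sum, MPScnt']
      · rw [if_neg hall, mul_zero]
        obtain ⟨j0, hj0⟩ := not_forall.1 hall
        exact Finset.prod_eq_zero (Finset.mem_univ j0) (if_neg hj0)
    rw [h1]
    split <;> ring
  calc ∑ ε : Fin k → Bool, (-1:ℂ)^(MPScnt' ε) * MPSA a (MPSsub n ε)
      = ∑ ε : Fin k → Bool, ∑ m ∈ MPSbox n,
          a m * ∏ j, (if m j + (if ε j then 1 else 0) ≤ n j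
            then (-1:ℂ)^(if ε j then 1 else 0) else 0) := by
        refine Finset.sum_congr rfl fun ε _ => ?_
        rw [hA ε, Finset.mul_sum]
        exact Finset.sum_congr rfl fun m hm => hterm ε m hm
    _ = ∑ m ∈ MPSbox n, a m * ∑ ε : Fin k → Bool,
          ∏ j, (if m j + (if ε j then 1 else 0) ≤ n j
            then (-1:ℂ)^(if ε j then 1 else 0) else 0) := by
        rw [Finset.sum_comm]
        exact Finset.sum_congr rfl fun m _ => (Finset.mul_sum _ _ _).symm
    _ = ∑ m ∈ MPSbox n, a m * (if m = n then 1 else 0) := by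
        refine Finset.sum_congr rfl fun m hm => ?_
        have hm' : ∀ j, 1 ≤ m j ∧ m j ≤ n j := by
          simpa [MPSbox, Fintype.mem_piFinset, Finset.mem_Icc] using hm
        congr 1
        have hswap : (∑ ε : Fin k → Bool,
              ∏ j, (if m j + (if ε j then 1 else 0) ≤ n j
                then (-1:ℂ)^(if ε j then 1 else 0) else 0))
            = ∏ j, ∑ b : Bool, (if m j + (if b then 1 else 0) ≤ n j
                then (-1:ℂ)^(if b then 1 else 0) else 0) := by
          rw [Finset.prod_univ_sum, Fintype.piFinset_univ]
        rw [hswap]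
        have hfac : ∀ j, (∑ b : Bool, (if m j + (if b then 1 else 0) ≤ n j
              then (-1:ℂ)^(if b then 1 else 0) else 0))
            = (if m j = n j then 1 else 0) := by
          intro j
          rw [Fintype.sum_bool]
          have h2 := (hm' j).2
          by_cases h : m j = n j
          · rw [if_pos h]
            have hno : ¬ (m j + (if (true:Bool) then 1 else 0) ≤ n j) := by simp; omega
            rw [if_neg hno]
            have hyes : (m j + (if (false:Bool) then 1 else 0) ≤ n j) := by simpa using h2
            rw [if_pos hyes]
            norm_num
          · rw [if_neg h]
            have h3 : (m j + (if (true:Bool) then 1 else 0) ≤ n j) := by simp; omega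
            rw [if_pos h3]
            have hyes : (m j + (if (false:Bool) then 1 else 0) ≤ n j) := by simpa using h2
            rw [if_pos hyes]
            norm_num
        rw [Finset.prod_congr rfl fun j _ => hfac j, Fintype.prod_boole]
        simp [funext_iff]
    _ = a n := by
        simp only [mul_ite, mul_one, mul_zero]
        rw [Finset.sum_ite_eq' (MPSbox n) n a, if_pos]
        simp only [MPSbox, Fintype.mem_piFinset, Finset.mem_Icc]
        exact fun j => ⟨hn j, le_refl _⟩


def MPSaddb (m : Fin k → ℕ) (ε : Fin k → Bool) : Fin k → ℕ :=
  fun j => m j + (if ε j then 1 else 0)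

def MPSPhi (M : Fin k → ℕ) (φ : (Fin k → ℝ) → ℂ) (n : Fin k → ℕ) : ℂ :=
  if ∀ j, n j ≤ M j then φ (fun j => (n j : ℝ)) else 0

lemma MPS_abel (M : Fin k → ℕ) (φ : (Fin k → ℝ) → ℂ) (a : (Fin k → ℕ) → ℂ) :
    ∑ n ∈ MPSbox M, a n * φ (fun j => (n j : ℝ))
    = ∑ m ∈ MPSbox M, MPSA a m *
        (∑ ε : Fin k → Bool, (-1:ℂ)^(MPScnt' ε) * MPSPhi M φ (MPSaddb m ε)) := by
  classical
  have key : ∀ ε : Fin k → Bool,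
      ∑ m ∈ MPSbox M, MPSA a m * MPSPhi M φ (MPSaddb m ε)
      = ∑ n ∈ MPSbox M, MPSA a (MPSsub n ε) * MPSPhi M φ n := by
    intro ε
    refine Finset.sum_bij_ne_zero (fun m _ _ => MPSaddb m ε) ?_ ?_ ?_ ?_
    · intro m h1 h2
      have hub : ∀ j, MPSaddb m ε j ≤ M j := by
        by_contra hcon
        apply h2
        rw [MPSPhi, if_neg hcon, mul_zero]
      have hm' : ∀ j, 1 ≤ m j ∧ m j ≤ M j := by
        simpa [MPSbox, Fintype.mem_piFinset, Finset.mem_Icc] using h1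
      simp only [MPSbox, Fintype.mem_piFinset, Finset.mem_Icc, MPSaddb]
      exact fun j => ⟨le_trans (hm' j).1 (Nat.le_add_right _ _), hub j⟩
    · intro m1 h11 h12 m2 h21 h22 heq
      funext j
      have := congrFun heq j
      simp only [MPSaddb] at this
      omega
    · intro n hn hg
      have hAne : MPSA a (MPSsub n ε) ≠ 0 := fun h => hg (by rw [h, zero_mul])
      have hpos : ∀ j, 1 ≤ MPSsub n ε j := by
        intro j
        by_contra hcon
        exact hAne (MPSA_zero a _ j (by omega))
      have hn' : ∀ j, 1 ≤ n j ∧ n j ≤ M j := by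
        simpa [MPSbox, Fintype.mem_piFinset, Finset.mem_Icc] using hn
      have haddsub : MPSaddb (MPSsub n ε) ε = n := by
        funext j
        have h1 := hpos j
        have h2 : (if ε j then 1 else 0) ≤ n j := by
          simp only [MPSsub] at h1; omega
        simp only [MPSaddb, MPSsub]
        omega
      refine ⟨MPSsub n ε, ?_, ?_, haddsub⟩
      · simp only [MPSbox, Fintype.mem_piFinset, Finset.mem_Icc]
        exact fun j => ⟨hpos j, le_trans (Nat.sub_le _ _) (hn' j).2⟩
      · rw [haddsub]
        exact hg
    · intro m h1 h2
      have hsubadd : MPSsub (MPSaddb m ε) ε = m := by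
        funext j
        simp only [MPSaddb, MPSsub]
        omega
      rw [hsubadd]
  calc ∑ n ∈ MPSbox M, a n * φ (fun j => (n j : ℝ))
      = ∑ n ∈ MPSbox M, MPSPhi M φ n * a n := by
        refine Finset.sum_congr rfl fun n hn => ?_
        have hn' : ∀ j, 1 ≤ n j ∧ n j ≤ M j := by
          simpa [MPSbox, Fintype.mem_piFinset, Finset.mem_Icc] using hn
        rw [MPSPhi, if_pos fun j => (hn' j).2, mul_comm]
    _ = ∑ n ∈ MPSbox M, MPSPhi M φ n *
          (∑ ε : Fin k → Bool, (-1:ℂ)^(MPScnt' ε) * MPSA a (MPSsub n ε)) := by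
        refine Finset.sum_congr rfl fun n hn => ?_
        have hn' : ∀ j, 1 ≤ n j ∧ n j ≤ M j := by
          simpa [MPSbox, Fintype.mem_piFinset, Finset.mem_Icc] using hn
        rw [MPS_diff a n fun j => (hn' j).1]
    _ = ∑ ε : Fin k → Bool, (-1:ℂ)^(MPScnt' ε) *
          ∑ n ∈ MPSbox M, MPSA a (MPSsub n ε) * MPSPhi M φ n := by
        simp only [Finset.mul_sum]
        rw [Finset.sum_comm]
        exact Finset.sum_congr rfl fun ε _ => Finset.sum_congr rfl fun n _ => by ring
    _ = ∑ ε : Fin k → Bool, (-1:ℂ)^(MPScnt' ε) *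
          ∑ m ∈ MPSbox M, MPSA a m * MPSPhi M φ (MPSaddb m ε) := by
        refine Finset.sum_congr rfl fun ε _ => by rw [key ε]
    _ = ∑ m ∈ MPSbox M, MPSA a m *
        (∑ ε : Fin k → Bool, (-1:ℂ)^(MPScnt' ε) * MPSPhi M φ (MPSaddb m ε)) := by
        simp only [Finset.mul_sum]
        rw [Finset.sum_comm]
        exact Finset.sum_congr rfl fun m _ => Finset.sum_congr rfl fun ε _ => by ring

lemma MPS_mixed_diff_bound {k : ℕ} :
    ∀ (r : ℕ) (f : (Fin k → ℝ) → ℂ), ContDiff ℝ (r : ℕ) f →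
    ∀ (j : Fin r → Fin k) (x : Fin k → ℝ) (C : ℝ),
    (∀ ε : Fin r → ℝ, (∀ l, ε l ∈ Set.Icc (0:ℝ) 1) →
      ‖iteratedFDeriv ℝ r f (x + ∑ l, ε l • (Pi.single (j l) (1:ℝ) : Fin k → ℝ))
        (fun l => Pi.single (j l) (1:ℝ))‖ ≤ C) →
    ‖∑ δ : Fin r → Bool,
        (-1 : ℂ) ^ (MPScnt' δ) *
          f (x + ∑ l, if δ l then (Pi.single (j l) (1:ℝ) : Fin k → ℝ) else 0)‖ ≤ C := by
  intro r
  induction r with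
  | zero =>
      intro f hf j x C hC
      have h0 := hC (fun l => 0) (fun l => by exact ⟨le_refl 0, zero_le_one⟩)
      simp only [iteratedFDeriv_zero_apply] at h0
      have : (Finset.univ : Finset (Fin 0 → Bool)) = {fun l => false} := by
        ext δ; simp [funext_iff]
      rw [this]
      simpa [MPScnt'] using h0
  | succ r IH =>
      intro f hf j x C hC
      classical
      have hle : (r : WithTop ℕ∞) + 1 ≤ ((r+1 : ℕ) : WithTop ℕ∞) := by norm_cast
      set e : Fin k → ℝ := Pi.single (j (Fin.last r)) 1 with he
      set v : (Fin r → Bool) → (Fin k → ℝ) :=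
        fun δ => ∑ l, if δ l then (Pi.single (j l.castSucc) (1:ℝ) : Fin k → ℝ) else 0 with hv
      set g : ℝ → ℂ := fun t =>
        ∑ δ : Fin r → Bool, (-1:ℂ)^(MPScnt' δ) * f (x + t • e + v δ) with hg
      set g' : ℝ → ℂ := fun t =>
        ∑ δ : Fin r → Bool, (-1:ℂ)^(MPScnt' δ) * fderiv ℝ f (x + t • e + v δ) e with hg'
      have hsplit : (∑ δ : Fin (r+1) → Bool, (-1:ℂ)^(MPScnt' δ) *
          f (x + ∑ l, if δ l then (Pi.single (j l) (1:ℝ) : Fin k → ℝ) else 0))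
          = g 0 - g 1 := by
        have hE : ∀ (F : (Fin (r+1) → Bool) → ℂ),
            (∑ δ, F δ) = ∑ p : (Fin r → Bool) × Bool, F (Fin.snoc p.1 p.2) := by
          intro F
          refine (Equiv.sum_comp ⟨fun p => Fin.snoc p.1 p.2,
            fun δ => (fun l => δ l.castSucc, δ (Fin.last r)), ?_, ?_⟩ F).symm
          · intro p; ext <;> simp
          · intro δ; exact funext (Fin.lastCases (by simp) (by simp))
        rw [hE]
        rw [Fintype.sum_prod_type]
        have hterm : ∀ (δ' : Fin r → Bool) (b : Bool),
            (-1:ℂ)^(MPScnt' (Fin.snoc δ' b : Fin (r+1) → Bool)) *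
              f (x + ∑ l, if (Fin.snoc δ' b : Fin (r+1) → Bool) l then
                (Pi.single (j l) (1:ℝ) : Fin k → ℝ) else 0)
            = if b then -((-1:ℂ)^(MPScnt' δ') * f (x + (1:ℝ) • e + v δ'))
              else (-1:ℂ)^(MPScnt' δ') * f (x + (0:ℝ) • e + v δ') := by
          intro δ' b
          have hcnt : MPScnt' (Fin.snoc δ' b : Fin (r+1) → Bool)
              = MPScnt' δ' + (if b then 1 else 0) := by
            unfold MPScnt'
            rw [Fin.sum_univ_castSucc]
            simp only [Fin.snoc_castSucc, Fin.snoc_last]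
          have hvec : (∑ l, if (Fin.snoc δ' b : Fin (r+1) → Bool) l then
                (Pi.single (j l) (1:ℝ) : Fin k → ℝ) else 0)
              = v δ' + (if b then e else 0) := by
            simp [hv, Fin.sum_univ_castSucc, he]
          rw [hcnt, hvec]
          cases b
          · simp
          · have harg : x + (v δ' + e) = x + (1:ℝ) • e + v δ' := by
              rw [one_smul]; abel
            simp only [if_true, harg, pow_succ]
            ring
        calc (∑ δ' : Fin r → Bool, ∑ b : Bool,
                (-1:ℂ)^(MPScnt' (Fin.snoc δ' b : Fin (r+1) → Bool)) *
                f (x + ∑ l, if (Fin.snoc δ' b : Fin (r+1) → Bool) l then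
                  (Pi.single (j l) (1:ℝ) : Fin k → ℝ) else 0))
            = ∑ δ' : Fin r → Bool,
                (-((-1:ℂ)^(MPScnt' δ') * f (x + (1:ℝ) • e + v δ'))
                  + (-1:ℂ)^(MPScnt' δ') * f (x + (0:ℝ) • e + v δ')) := by
              refine Finset.sum_congr rfl fun δ' _ => ?_
              rw [Fintype.sum_bool, hterm δ' true, hterm δ' false]; simp
          _ = g 0 - g 1 := by
              rw [Finset.sum_add_distrib, Finset.sum_neg_distrib]
              simp only [hg]
              ring
      rw [hsplit]
      have hderiv : ∀ t ∈ Set.Icc (0:ℝ) 1, HasDerivAt g (g' t) t := by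
        intro t _
        refine HasDerivAt.fun_sum fun δ _ => ?_
        have hin : HasDerivAt (fun t : ℝ => x + t • e + v δ) e t := by
          simpa using (((hasDerivAt_id t).smul_const e).const_add x).add_const (v δ)
        have hdf : HasFDerivAt f (fderiv ℝ f (x + t • e + v δ)) (x + t • e + v δ) :=
          (hf.differentiable (by simp)
            ).differentiableAt.hasFDerivAt
        exact (hdf.comp_hasDerivAt t hin).const_mul _
      have hbound' : ∀ t ∈ Set.Ico (0:ℝ) 1, ‖g' t‖ ≤ C := by
        intro t ht
        have hh : ContDiff ℝ (r : ℕ) (fun z => fderiv ℝ f z e) :=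
          (hf.fderiv_right hle).clm_apply contDiff_const
        have key : ∀ y : Fin k → ℝ,
            iteratedFDeriv ℝ r (fun z => fderiv ℝ f z e) y
              (fun l => (Pi.single (j l.castSucc) (1:ℝ) : Fin k → ℝ))
            = iteratedFDeriv ℝ (r+1) f y (fun l => Pi.single (j l) 1) := by
          intro y
          have hL := (ContinuousLinearMap.apply ℝ ℂ e).iteratedFDeriv_comp_left
            (f := fun z => fderiv ℝ f z) ((hf.fderiv_right hle).contDiffAt (x := y)) (le_refl _)
          have h1 : iteratedFDeriv ℝ r (fun z => fderiv ℝ f z e) y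
              (fun l => (Pi.single (j l.castSucc) (1:ℝ) : Fin k → ℝ))
              = iteratedFDeriv ℝ r (fderiv ℝ f) y
              (fun l => (Pi.single (j l.castSucc) (1:ℝ) : Fin k → ℝ)) e := by
            have := congrArg (fun (T : ContinuousMultilinearMap ℝ (fun _ : Fin r => (Fin k → ℝ)) ℂ)
              => T (fun l => (Pi.single (j l.castSucc) (1:ℝ) : Fin k → ℝ))) hL
            exact this
          rw [h1, iteratedFDeriv_succ_apply_right]
          rfl
        apply le_trans (le_of_eq ?_) (IH (fun z => fderiv ℝ f z e) hh
          (fun l => j l.castSucc) (x + t • e) C ?_)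
        · simp only [hg', hv]
        · intro εr hεr
          rw [show x + t • e + ∑ l, εr l • (Pi.single (j l.castSucc) (1:ℝ) : Fin k → ℝ)
              = (x + t • e) + ∑ l, εr l • (Pi.single (j l.castSucc) (1:ℝ) : Fin k → ℝ) from rfl] at *
          rw [key]
          have hpt : (x + t • e) + (∑ l, εr l • (Pi.single (j l.castSucc) (1:ℝ) : Fin k → ℝ))
              = x + ∑ l : Fin (r+1), (Fin.snoc εr t : Fin (r+1) → ℝ) l •
                  (Pi.single (j l) (1:ℝ) : Fin k → ℝ) := by
            rw [Fin.sum_univ_castSucc]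
            simp [he]
            abel
          rw [hpt]
          exact hC (Fin.snoc εr t) (Fin.lastCases (by simpa using ⟨ht.1, le_of_lt ht.2⟩)
            (fun l => by simpa using hεr l))
      have := norm_image_sub_le_of_norm_deriv_le_segment'
        (fun t ht => (hderiv t ht).hasDerivWithinAt) hbound' 1 (by norm_num)
      rw [norm_sub_rev]
      simpa using this



lemma MPS_delta_bound (M : Fin k → ℕ) (D : ℝ)
    (φ : (Fin k → ℝ) → ℂ) (hφ : ContDiff ℝ k φ)
    (hb : ∀ x ∈ Set.Icc (fun _ => (1:ℝ)) (fun j => (M j : ℝ)), ∀ r : ℕ, r ≤ k →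
      ∀ j : Fin r → Fin k, StrictMono j →
        ‖iteratedFDeriv ℝ r φ x (fun l => Pi.single (j l) (1:ℝ))‖ ≤ D / ∏ l, (M (j l) : ℝ))
    (m : Fin k → ℕ) (hm : ∀ j, 1 ≤ m j ∧ m j ≤ M j) :
    ‖∑ ε : Fin k → Bool, (-1:ℂ)^(MPScnt' ε) * MPSPhi M φ (MPSaddb m ε)‖
      ≤ D * ∏ j, (if m j = M j then 1 else ((M j : ℝ))⁻¹) := by
  classical
  set s : Finset (Fin k) := Finset.univ.filter (fun j => m j ≠ M j) with hs
  set r := s.card with hr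
  have hrk : r ≤ k := le_trans (Finset.card_filter_le _ _) (by simp)
  set iso := s.orderIsoOfFin rfl with hiso
  set em : Fin r → Fin k := fun l => (iso l : Fin k) with hem
  have hmem_em : ∀ l, em l ∈ s := fun l => (iso l).2
  have hstrict : StrictMono em := fun p q hpq => iso.strictMono hpq
  have hem_inj : Function.Injective em := hstrict.injective
  have hlt : ∀ i ∈ s, m i < M i := by
    intro i hi
    have := (Finset.mem_filter.1 hi).2
    exact lt_of_le_of_ne (hm i).2 this
  have heq_of_not : ∀ i, i ∉ s → m i = M i := by
    intro i hi
    by_contra hne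
    exact hi (Finset.mem_filter.2 ⟨Finset.mem_univ _, hne⟩)
  have hcomp : ∀ (c : Fin r → ℝ) (i : Fin k),
      (∑ l, c l • (Pi.single (em l) (1:ℝ) : Fin k → ℝ)) i
      = if h : i ∈ s then c (iso.symm ⟨i, h⟩) else 0 := by
    intro c i
    rw [Finset.sum_apply]
    by_cases h : i ∈ s
    · rw [dif_pos h]
      have hl0 : em (iso.symm ⟨i, h⟩) = i := by
        simp [hem]
      have hz : ∀ l ∈ Finset.univ, l ≠ iso.symm ⟨i, h⟩ →
          (c l • (Pi.single (em l) (1:ℝ) : Fin k → ℝ)) i = 0 := by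
        intro l _ hne
        have hne' : em l ≠ i := fun hei => hne (hem_inj (by rw [hei, hl0]))
        rw [Pi.smul_apply, Pi.single_eq_of_ne (Ne.symm hne'), smul_zero]
      rw [Finset.sum_eq_single (iso.symm ⟨i, h⟩) hz
        (fun hcon => absurd (Finset.mem_univ _) hcon)]
      rw [Pi.smul_apply, hl0, Pi.single_eq_same, smul_eq_mul, mul_one]
    · rw [dif_neg h]
      refine Finset.sum_eq_zero fun l _ => ?_
      have hne' : em l ≠ i := fun hei => h (hei ▸ hmem_em l)
      rw [Pi.smul_apply, Pi.single_eq_of_ne (Ne.symm hne'), smul_zero]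
  set θ : (Fin r → Bool) → (Fin k → Bool) :=
    fun δ i => if h : i ∈ s then δ (iso.symm ⟨i, h⟩) else false with hθ
  have hθ_em : ∀ δ l, θ δ (em l) = δ l := by
    intro δ l
    have h := hmem_em l
    show (if h : em l ∈ s then δ (iso.symm ⟨em l, h⟩) else false) = δ l
    rw [dif_pos h]
    congr 1
    have : (⟨em l, h⟩ : {x // x ∈ s}) = iso l := Subtype.ext rfl
    rw [this, OrderIso.symm_apply_apply]
  have hsubset_zero : ∀ ε : Fin k → Bool,
      (-1:ℂ)^(MPScnt' ε) * MPSPhi M φ (MPSaddb m ε) ≠ 0 → ∀ i, ε i = true → i ∈ s := by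
    intro ε hne i hi
    by_contra hnot
    apply hne
    have hmi : m i = M i := heq_of_not i hnot
    have hnall : ¬ (∀ j, MPSaddb m ε j ≤ M j) := by
      intro hall
      have := hall i
      rw [MPSaddb] at this
      simp only [hi, if_true, hmi] at this
      omega
    rw [MPSPhi, if_neg hnall, mul_zero]
  have h1 : (∑ ε : Fin k → Bool, (-1:ℂ)^(MPScnt' ε) * MPSPhi M φ (MPSaddb m ε))
      = ∑ ε ∈ Finset.univ.filter (fun ε : Fin k → Bool => ∀ i, ε i = true → i ∈ s),
          (-1:ℂ)^(MPScnt' ε) * MPSPhi M φ (MPSaddb m ε) :=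
    (Finset.sum_filter_of_ne (fun ε _ hne => hsubset_zero ε hne)).symm
  have h2 : (∑ ε ∈ Finset.univ.filter (fun ε : Fin k → Bool => ∀ i, ε i = true → i ∈ s),
          (-1:ℂ)^(MPScnt' ε) * MPSPhi M φ (MPSaddb m ε))
      = ∑ δ : Fin r → Bool, (-1:ℂ)^(MPScnt' (θ δ)) * MPSPhi M φ (MPSaddb m (θ δ)) := by
    refine (Finset.sum_bij (fun (δ : Fin r → Bool) _ => θ δ) ?_ ?_ ?_ ?_).symm
    · intro δ _
      refine Finset.mem_filter.2 ⟨Finset.mem_univ _, fun i hi => ?_⟩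
      have hi' : θ δ i = true := hi
      by_contra hnot
      rw [show θ δ i = (if h : i ∈ s then δ (iso.symm ⟨i, h⟩) else false) from rfl,
        dif_neg hnot] at hi'
      exact Bool.false_ne_true hi'
    · intro δ1 _ δ2 _ heq
      have heq' : θ δ1 = θ δ2 := heq
      funext l
      have := congrFun heq' (em l)
      rwa [hθ_em, hθ_em] at this
    · intro ε hε
      refine ⟨fun l => ε (em l), Finset.mem_univ _, ?_⟩
      funext i
      show (if h : i ∈ s then ε (em (iso.symm ⟨i, h⟩)) else false) = ε i
      by_cases h : i ∈ s
      · rw [dif_pos h]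
        congr 1
        simp [hem]
      · rw [dif_neg h]
        have := (Finset.mem_filter.1 hε).2
        cases hei : ε i
        · rfl
        · exact absurd (this i hei) h
    · intro δ _; rfl
  have hcnt : ∀ δ : Fin r → Bool, MPScnt' (θ δ) = MPScnt' δ := by
    intro δ
    rw [MPScnt', MPScnt']
    rw [← Finset.sum_subset (Finset.subset_univ s) (fun i _ hi => by
      rw [show θ δ i = (if h : i ∈ s then δ (iso.symm ⟨i, h⟩) else false) from rfl,
        dif_neg hi]
      rfl)]
    rw [← Finset.sum_coe_sort s (fun i => if θ δ i then 1 else 0)]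
    rw [← Equiv.sum_comp iso.toEquiv
      (fun x : {x // x ∈ s} => if θ δ (x : Fin k) then 1 else 0)]
    refine Finset.sum_congr rfl fun l _ => ?_
    rw [show ((iso.toEquiv l : {x // x ∈ s}) : Fin k) = em l from rfl, hθ_em]
  have hle_add : ∀ (δ : Fin r → Bool) j, MPSaddb m (θ δ) j ≤ M j := by
    intro δ j
    rw [MPSaddb]
    by_cases h : j ∈ s
    · have := hlt j h
      split <;> omega
    · rw [show θ δ j = (if h : j ∈ s then δ (iso.symm ⟨j, h⟩) else false) from rfl,
        dif_neg h]
      simpa using (hm j).2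
  have hsmul_ite : ∀ (δ : Fin r → Bool) (l : Fin r),
      (if δ l then (1:ℝ) else 0) • (Pi.single (em l) (1:ℝ) : Fin k → ℝ)
      = (if δ l then (Pi.single (em l) (1:ℝ) : Fin k → ℝ) else 0) := by
    intro δ l; split <;> simp
  have hvec : ∀ δ : Fin r → Bool, (fun j => (MPSaddb m (θ δ) j : ℝ))
      = (fun j => (m j : ℝ)) + ∑ l, (if δ l then (Pi.single (em l) (1:ℝ) : Fin k → ℝ) else 0) := by
    intro δ
    funext i
    rw [Pi.add_apply, ← Finset.sum_congr rfl (fun l _ => (hsmul_ite δ l)), hcomp]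
    show ((m i + if θ δ i then 1 else 0 : ℕ) : ℝ) = _
    rw [show θ δ i = (if h : i ∈ s then δ (iso.symm ⟨i, h⟩) else false) from rfl]
    by_cases h : i ∈ s
    · rw [dif_pos h, dif_pos h]
      push_cast
      split <;> simp
    · rw [dif_neg h, dif_neg h]
      push_cast
      simp
  rw [h1, h2]
  have hsum_eq : (∑ δ : Fin r → Bool, (-1:ℂ)^(MPScnt' (θ δ)) * MPSPhi M φ (MPSaddb m (θ δ)))
      = ∑ δ : Fin r → Bool, (-1:ℂ)^(MPScnt' δ) *
          φ ((fun j => (m j : ℝ)) +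
            ∑ l, if δ l then (Pi.single (em l) (1:ℝ) : Fin k → ℝ) else 0) := by
    refine Finset.sum_congr rfl fun δ _ => ?_
    rw [hcnt δ, MPSPhi, if_pos (hle_add δ), hvec δ]
  rw [hsum_eq]
  have hcube : ∀ εr : Fin r → ℝ, (∀ l, εr l ∈ Set.Icc (0:ℝ) 1) →
      ‖iteratedFDeriv ℝ r φ ((fun j => (m j : ℝ)) +
          ∑ l, εr l • (Pi.single (em l) (1:ℝ) : Fin k → ℝ))
        (fun l => Pi.single (em l) (1:ℝ))‖ ≤ D / ∏ l, (M (em l) : ℝ) := by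
    intro εr hεr
    refine hb _ (Set.mem_Icc.2 ⟨Pi.le_def.2 fun i => ?_, Pi.le_def.2 fun i => ?_⟩)
      r hrk em hstrict
    · show (1:ℝ) ≤ ((fun j => (m j : ℝ)) + ∑ l, εr l • (Pi.single (em l) (1:ℝ) : Fin k → ℝ)) i
      rw [Pi.add_apply, hcomp]
      by_cases h : i ∈ s
      · rw [dif_pos h]
        have h1 : (1:ℝ) ≤ (m i : ℝ) := by exact_mod_cast (hm i).1
        have h2 := (hεr (iso.symm ⟨i, h⟩)).1
        linarith
      · rw [dif_neg h]
        have h1 : (1:ℝ) ≤ (m i : ℝ) := by exact_mod_cast (hm i).1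
        linarith
    · show ((fun j => (m j : ℝ)) + ∑ l, εr l • (Pi.single (em l) (1:ℝ) : Fin k → ℝ)) i ≤ (M i : ℝ)
      rw [Pi.add_apply, hcomp]
      by_cases h : i ∈ s
      · rw [dif_pos h]
        have h1 : (m i : ℝ) + 1 ≤ (M i : ℝ) := by exact_mod_cast hlt i h
        have h2 := (hεr (iso.symm ⟨i, h⟩)).2
        linarith
      · rw [dif_neg h]
        have h1 : (m i : ℝ) ≤ (M i : ℝ) := by exact_mod_cast (hm i).2
        linarith
  have hA := MPS_mixed_diff_bound r φ (hφ.of_le (by exact_mod_cast hrk))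
    em (fun j => (m j : ℝ)) (D / ∏ l, (M (em l) : ℝ)) hcube
  refine le_trans hA (le_of_eq ?_)
  rw [div_eq_mul_inv]
  congr 1
  rw [← Finset.prod_inv_distrib]
  have hprod1 : (∏ l, ((M (em l) : ℝ))⁻¹) = ∏ j ∈ s, ((M j : ℝ))⁻¹ := by
    rw [← Finset.prod_coe_sort s (fun j => ((M j : ℝ))⁻¹)]
    rw [← Equiv.prod_comp iso.toEquiv (fun x : {x // x ∈ s} => ((M (x : Fin k) : ℝ))⁻¹)]
    rfl
  rw [hprod1]
  have hprod2 : (∏ j, (if m j = M j then (1:ℝ) else ((M j : ℝ))⁻¹))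
      = ∏ j ∈ s, ((M j : ℝ))⁻¹ := by
    rw [show (∏ j, (if m j = M j then (1:ℝ) else ((M j : ℝ))⁻¹))
        = ∏ j, (if m j ≠ M j then ((M j : ℝ))⁻¹ else 1) from
      Finset.prod_congr rfl fun j _ => by by_cases h : m j = M j <;> simp [h]]
    rw [← Finset.prod_filter]
  rw [hprod2]


end MPShelp

theorem multidimensional_partial_summation
    (k : ℕ) (hk : 1 ≤ k) (M : Fin k → ℕ) (hM : ∀ j, 0 < M j)
    (I : Type) [Fintype I] (D : ℝ) (hD : 0 < D)
    (φ : I → (Fin k → ℝ) → ℂ) (hφ : ∀ i, ContDiff ℝ k (φ i))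
    (hbound : ∀ i, ∀ x ∈ Set.Icc (fun _ => (1 : ℝ)) (fun j => (M j : ℝ)),
      ∀ r : ℕ, r ≤ k → ∀ j : Fin r → Fin k, StrictMono j →
        ‖iteratedFDeriv ℝ r (φ i) x (fun l => Pi.single (j l) (1 : ℝ))‖
          ≤ D / ∏ l, (M (j l) : ℝ))
    (a : I → (Fin k → ℕ) → ℂ) :
    ∃ M' : Fin k → ℕ, (∀ j, 1 ≤ M' j ∧ M' j ≤ M j) ∧
      ∑ i : I, ‖∑ m ∈ Fintype.piFinset (fun j => Finset.Icc 1 (M j)),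
          a i m * φ i (fun j => (m j : ℝ))‖
        ≤ 2 ^ k * D *
          ∑ i : I, ‖∑ m ∈ Fintype.piFinset (fun j => Finset.Icc 1 (M' j)), a i m‖ := by
  classical
  have hbox_ne : (MPSbox M).Nonempty := by
    refine ⟨fun _ => 1, ?_⟩
    simp only [MPSbox, Fintype.mem_piFinset, Finset.mem_Icc]
    exact fun j => ⟨le_refl 1, hM j⟩
  obtain ⟨M', hM'mem, hmax⟩ :=
    Finset.exists_max_image (MPSbox M) (fun m => ∑ i, ‖MPSA (a i) m‖) hbox_ne
  have hM' : ∀ j, 1 ≤ M' j ∧ M' j ≤ M j := by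
    simpa only [MPSbox, Fintype.mem_piFinset, Finset.mem_Icc] using hM'mem
  refine ⟨M', hM', ?_⟩
  set S := ∑ i, ‖MPSA (a i) M'‖ with hS
  have hS0 : 0 ≤ S := Finset.sum_nonneg fun i _ => norm_nonneg _
  have hB0 : ∀ m : Fin k → ℕ,
      0 ≤ D * ∏ j, (if m j = M j then (1:ℝ) else ((M j : ℝ))⁻¹) := by
    intro m
    refine mul_nonneg hD.le (Finset.prod_nonneg fun j _ => ?_)
    split
    · norm_num
    · positivity
  have hfac_nonneg : ∀ j, (0:ℝ) ≤ ∑ v ∈ Finset.Icc 1 (M j),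
      (if v = M j then (1:ℝ) else ((M j : ℝ))⁻¹) := by
    intro j
    refine Finset.sum_nonneg fun v _ => ?_
    split
    · norm_num
    · positivity
  have hc : ∀ j, (∑ v ∈ Finset.Icc 1 (M j),
      (if v = M j then (1:ℝ) else ((M j : ℝ))⁻¹)) ≤ 2 := by
    intro j
    have hsplit : ∀ v : ℕ, (if v = M j then (1:ℝ) else ((M j : ℝ))⁻¹)
        = ((M j : ℝ))⁻¹ + (if v = M j then 1 - ((M j : ℝ))⁻¹ else 0) := by
      intro v; split <;> ring
    rw [Finset.sum_congr rfl fun v _ => hsplit v, Finset.sum_add_distrib,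
      Finset.sum_const,
      Finset.sum_ite_eq' (Finset.Icc 1 (M j)) (M j) (fun _ => 1 - ((M j : ℝ))⁻¹),
      if_pos (Finset.mem_Icc.2 ⟨hM j, le_refl _⟩), Nat.card_Icc, nsmul_eq_mul]
    have hMj : (0:ℝ) < (M j : ℝ) := by exact_mod_cast hM j
    have hcard : ((M j + 1 - 1 : ℕ) : ℝ) = (M j : ℝ) := by
      rw [Nat.add_sub_cancel]
    rw [hcard, mul_inv_cancel₀ hMj.ne']
    have : (0:ℝ) ≤ ((M j : ℝ))⁻¹ := by positivity
    linarith
  have hcount : (∑ m ∈ MPSbox M,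
      D * ∏ j, (if m j = M j then (1:ℝ) else ((M j : ℝ))⁻¹)) ≤ 2 ^ k * D := by
    rw [← Finset.mul_sum]
    have hswap : (∑ m ∈ MPSbox M, ∏ j, (if m j = M j then (1:ℝ) else ((M j : ℝ))⁻¹))
        = ∏ j, ∑ v ∈ Finset.Icc 1 (M j), (if v = M j then (1:ℝ) else ((M j : ℝ))⁻¹) := by
      rw [show MPSbox M = Fintype.piFinset (fun j => Finset.Icc 1 (M j)) from rfl]
      exact (Finset.prod_univ_sum (fun j => Finset.Icc 1 (M j))
        (fun j v => if v = M j then (1:ℝ) else ((M j : ℝ))⁻¹)).symm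
    rw [hswap]
    have h2 : (∏ j, ∑ v ∈ Finset.Icc 1 (M j), (if v = M j then (1:ℝ) else ((M j : ℝ))⁻¹))
        ≤ ∏ _j : Fin k, (2:ℝ) :=
      Finset.prod_le_prod (fun j _ => hfac_nonneg j) (fun j _ => hc j)
    rw [Finset.prod_const] at h2
    calc D * ∏ j, ∑ v ∈ Finset.Icc 1 (M j), (if v = M j then (1:ℝ) else ((M j : ℝ))⁻¹)
        ≤ D * 2 ^ (Finset.univ : Finset (Fin k)).card :=
          mul_le_mul_of_nonneg_left h2 hD.le
      _ = 2 ^ k * D := by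
          rw [Finset.card_univ, Fintype.card_fin]
          ring
  have step1 : ∀ i, (∑ m ∈ Fintype.piFinset (fun j => Finset.Icc 1 (M j)),
      a i m * φ i (fun j => (m j : ℝ)))
      = ∑ m ∈ MPSbox M, MPSA (a i) m *
          (∑ ε : Fin k → Bool, (-1:ℂ)^(MPScnt' ε) * MPSPhi M (φ i) (MPSaddb m ε)) :=
    fun i => MPS_abel M (φ i) (a i)
  calc (∑ i : I, ‖∑ m ∈ Fintype.piFinset (fun j => Finset.Icc 1 (M j)),
          a i m * φ i (fun j => (m j : ℝ))‖)
      = ∑ i : I, ‖∑ m ∈ MPSbox M, MPSA (a i) m *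
          (∑ ε : Fin k → Bool, (-1:ℂ)^(MPScnt' ε) * MPSPhi M (φ i) (MPSaddb m ε))‖ := by
        exact Finset.sum_congr rfl fun i _ => by rw [step1 i]
    _ ≤ ∑ i : I, ∑ m ∈ MPSbox M, ‖MPSA (a i) m‖ *
          (D * ∏ j, (if m j = M j then (1:ℝ) else ((M j : ℝ))⁻¹)) := by
        refine Finset.sum_le_sum fun i _ => ?_
        refine le_trans (norm_sum_le _ _) (Finset.sum_le_sum fun m hm => ?_)
        rw [norm_mul]
        have hm' : ∀ j, 1 ≤ m j ∧ m j ≤ M j := by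
          simpa only [MPSbox, Fintype.mem_piFinset, Finset.mem_Icc] using hm
        exact mul_le_mul_of_nonneg_left
          (MPS_delta_bound M D (φ i) (hφ i) (hbound i) m hm') (norm_nonneg _)
    _ = ∑ m ∈ MPSbox M, (∑ i : I, ‖MPSA (a i) m‖) *
          (D * ∏ j, (if m j = M j then (1:ℝ) else ((M j : ℝ))⁻¹)) := by
        rw [Finset.sum_comm]
        exact Finset.sum_congr rfl fun m _ => (Finset.sum_mul _ _ _).symm
    _ ≤ ∑ m ∈ MPSbox M, S *
          (D * ∏ j, (if m j = M j then (1:ℝ) else ((M j : ℝ))⁻¹)) := by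
        refine Finset.sum_le_sum fun m hm => ?_
        exact mul_le_mul_of_nonneg_right (hmax m hm) (hB0 m)
    _ = S * ∑ m ∈ MPSbox M,
          (D * ∏ j, (if m j = M j then (1:ℝ) else ((M j : ℝ))⁻¹)) := by
        rw [Finset.mul_sum]
    _ ≤ S * (2 ^ k * D) := mul_le_mul_of_nonneg_left hcount hS0
    _ = 2 ^ k * D * S := by ring
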